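/- For any real numbers a, b with |a| < 1, |b| < 1, the seven points (0,0), (1,a), (1+b, 1+a), (2+b, 1+a+b), (2+2b, 2+a+b), (3+2b, 2+a+2b), (3+2b+c, 3+a+2b) contain three collinear points; specifically, the points (1,a), (2+b, 1+a+b), and (3+2b, 2+a+2b) lie on a common line. (Hence the type xyxyxy is not realizable as a line-like crescent configuration in L∞, so line-like crescent configurations of alternating type xyxy… in L∞ have size at most 6.) -/

import Mathlib

/-- For any a, b with |a| < 1, |b| < 1, the points (1,a), (2+b, 1+a+b), and
(3+2b, 2+a+2b) are collinear; hence the type xyxyxy is not realizable as a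
line-like crescent configuration in L∞. -/
theorem xyxyxy_three_collinear (a b : ℝ) (ha : |a| < 1) (hb : |b| < 1) :
    Collinear ℝ ({((1 : ℝ), a), (2 + b, 1 + a + b), (3 + 2 * b, 2 + a + 2 * b)} :
      Set (ℝ × ℝ)) := by
  rw [collinear_iff_of_mem (Set.mem_insert _ _)]
  refine ⟨(1, 1), ?_⟩
  rintro p (rfl | rfl | rfl)
  · exact ⟨0, by norm_num⟩
  · exact ⟨1 + b, by simp [Prod.ext_iff]; ring_nf; constructor <;> trivial⟩
  · exact ⟨2 + 2 * b, by simp [Prod.ext_iff]; constructor <;> ring⟩
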